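/- In a finite symmetric zero-sum two-player game with antisymmetric payoff matrix A : Fin n → Fin n → ℝ, a pair of mixed strategies (x,y) ∈ Δ × Δ is a Nash equilibrium if and only if 𝒱(x) = 0 and 𝒱(y) = 0. (Theorem 3, second part.) -/
import Mathlib


/-- The standard simplex of mixed strategies over `n` pure strategies. -/
def simplex (n : ℕ) : Set (Fin n → ℝ) :=
  {x | (∀ i, 0 ≤ x i) ∧ ∑ i, x i = 1}

/-- Player 1's expected payoff `U(x,y) = ∑ i, ∑ j, x i * A i j * y j`. -/
def pay {n : ℕ} (A : Fin n → Fin n → ℝ) (x y : Fin n → ℝ) : ℝ :=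
  ∑ i, ∑ j, x i * A i j * y j

/-- `(x,y)` is a Nash equilibrium of the symmetric zero-sum game with matrix `A`. -/
def isNash {n : ℕ} (A : Fin n → Fin n → ℝ) (x y : Fin n → ℝ) : Prop :=
  (∀ x' ∈ simplex n, pay A x' y ≤ pay A x y) ∧
  (∀ y' ∈ simplex n, pay A y' x ≤ pay A y x)

/-- The advantage `𝒱(x) = min_{y∈Δ} U(x,y)`. -/
noncomputable def adv {n : ℕ} (A : Fin n → Fin n → ℝ) (x : Fin n → ℝ) : ℝ :=
  sInf {v : ℝ | ∃ y ∈ simplex n, v = pay A x y}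

lemma simplex_le_one {n : ℕ} {x : Fin n → ℝ} (hx : x ∈ simplex n) (i : Fin n) : x i ≤ 1 := by
  obtain ⟨h1, h2⟩ := hx
  calc x i ≤ ∑ j, x j := Finset.single_le_sum (fun j _ => h1 j) (Finset.mem_univ i)
    _ = 1 := h2

lemma pay_antisymm {n : ℕ} (A : Fin n → Fin n → ℝ) (hA : ∀ i j, A j i = -A i j)
    (u v : Fin n → ℝ) : pay A u v = -pay A v u := by
  unfold pay
  rw [Finset.sum_comm (f := fun i j => v i * A i j * u j)]
  rw [← Finset.sum_neg_distrib]
  apply Finset.sum_congr rfl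
  intro i _
  rw [← Finset.sum_neg_distrib]
  apply Finset.sum_congr rfl
  intro j _
  rw [hA i j]
  ring

lemma pay_self {n : ℕ} (A : Fin n → Fin n → ℝ) (hA : ∀ i j, A j i = -A i j)
    (u : Fin n → ℝ) : pay A u u = 0 := by
  have := pay_antisymm A hA u u
  linarith

lemma pay_lb {n : ℕ} (A : Fin n → Fin n → ℝ) {u v : Fin n → ℝ}
    (hu : u ∈ simplex n) (hv : v ∈ simplex n) :
    -(∑ i, ∑ j, |A i j|) ≤ pay A u v := by
  have key : ∑ i, ∑ j, -|A i j| ≤ pay A u v := by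
    apply Finset.sum_le_sum
    intro i _
    apply Finset.sum_le_sum
    intro j _
    have habs : |u i * A i j * v j| ≤ |A i j| := by
      rw [abs_mul, abs_mul]
      have h1 : |u i| ≤ 1 := by rw [abs_of_nonneg (hu.1 i)]; exact simplex_le_one hu i
      have h2 : |v j| ≤ 1 := by rw [abs_of_nonneg (hv.1 j)]; exact simplex_le_one hv j
      have h3 : 0 ≤ |A i j| := abs_nonneg _
      have e1 : |u i| * |A i j| ≤ |A i j| := mul_le_of_le_one_left h3 h1
      have e2 : |u i| * |A i j| * |v j| ≤ |u i| * |A i j| :=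
        mul_le_of_le_one_right (mul_nonneg (abs_nonneg _) h3) h2
      linarith
    have := neg_abs_le (u i * A i j * v j)
    linarith
  calc -(∑ i, ∑ j, |A i j|) = ∑ i, ∑ j, -|A i j| := by
        simp [Finset.sum_neg_distrib]
    _ ≤ pay A u v := key

lemma adv_eq_zero_iff {n : ℕ} (A : Fin n → Fin n → ℝ) (hA : ∀ i j, A j i = -A i j)
    {x : Fin n → ℝ} (hx : x ∈ simplex n) :
    adv A x = 0 ↔ ∀ y' ∈ simplex n, 0 ≤ pay A x y' := by
  have hmem : (0 : ℝ) ∈ {v : ℝ | ∃ y ∈ simplex n, v = pay A x y} :=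
    ⟨x, hx, (pay_self A hA x).symm⟩
  have hbdd : BddBelow {v : ℝ | ∃ y ∈ simplex n, v = pay A x y} := by
    refine ⟨-(∑ i, ∑ j, |A i j|), ?_⟩
    rintro v ⟨y', hy', rfl⟩
    exact pay_lb A hx hy'
  constructor
  · intro h y' hy'
    have : adv A x ≤ pay A x y' := csInf_le hbdd ⟨y', hy', rfl⟩
    linarith
  · intro h
    apply le_antisymm
    · exact csInf_le hbdd hmem
    · exact le_csInf ⟨0, hmem⟩ (by rintro v ⟨y', hy', rfl⟩; exact h y' hy')

/-- Theorem 3 (second part): in a finite symmetric zero-sum two-player game,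
`(x,y)` is a Nash equilibrium if and only if `𝒱(x) = 0` and `𝒱(y) = 0`. -/
theorem nash_iff_advantages_zero {n : ℕ} (A : Fin n → Fin n → ℝ)
    (hA : ∀ i j, A j i = -A i j)
    (x y : Fin n → ℝ) (hx : x ∈ simplex n) (hy : y ∈ simplex n) :
    isNash A x y ↔ (adv A x = 0 ∧ adv A y = 0) := by
  constructor
  · rintro ⟨h1, h2⟩
    have a := h1 y hy
    have b := h2 x hx
    rw [pay_self A hA y] at a
    rw [pay_self A hA x] at b
    have hanti := pay_antisymm A hA x y
    have hxy0 : pay A x y = 0 := by linarith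
    have hyx0 : pay A y x = 0 := by linarith
    constructor
    · rw [adv_eq_zero_iff A hA hx]
      intro y' hy'
      have := h2 y' hy'
      have := pay_antisymm A hA x y'
      linarith
    · rw [adv_eq_zero_iff A hA hy]
      intro x' hx'
      have := h1 x' hx'
      have := pay_antisymm A hA y x'
      linarith
  · rintro ⟨hax, hay⟩
    rw [adv_eq_zero_iff A hA hx] at hax
    rw [adv_eq_zero_iff A hA hy] at hay
    have hyx0 : pay A y x = 0 := by
      have h1 := hax y hy
      have h2 := hay x hx
      have := pay_antisymm A hA x y
      linarith
    have hxy0 : pay A x y = 0 := by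
      have := pay_antisymm A hA x y
      linarith
    constructor
    · intro x' hx'
      have := hay x' hx'
      have := pay_antisymm A hA x' y
      linarith
    · intro y' hy'
      have := hax y' hy'
      have := pay_antisymm A hA y' x
      linarith
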